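/- Let A be a nontrivial commutative ring, α_1, …, α_N ∈ A such that α_i − α_j is a unit for all i ≠ j, v_1, …, v_N units of A, and 1 ≤ k ≤ N. Then every nonzero codeword of the generalized Reed–Solomon code GRS_v(N,k) has Hamming weight at least N − k + 1, and there exists a nonzero codeword of Hamming weight exactly N − k + 1; that is, the minimum Hamming distance of GRS_v(N,k) equals N − k + 1 (GRS codes are MDS). -/

import Mathlib

/-- The evaluation (encoding) map of a generalized Reed–Solomon code: it sends a polynomial
of degree `< k` to the vector of its scaled evaluations at the points `α i`. -/
noncomputable def GRSmap (A : Type*) [CommRing A] {N : ℕ} (k : ℕ) (α v : Fin N → A) :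
    Polynomial.degreeLT A k →ₗ[A] (Fin N → A) where
  toFun f i := v i * Polynomial.eval (α i) (f : Polynomial A)
  map_add' f g := by funext i; simp [mul_add]
  map_smul' c f := by funext i; simp [Polynomial.eval_smul]; ring

open Polynomial Finset

/-- A polynomial of degree `< k` vanishing on `k` points with pairwise-unit differences
is the zero polynomial. -/
lemma GRS_vanish_aux {A : Type*} [CommRing A] [Nontrivial A] (k : ℕ) :
    ∀ (f : Polynomial A) (S : Finset A), f.degree < k → k ≤ S.card →
      (∀ a ∈ S, ∀ b ∈ S, a ≠ b → IsUnit (a - b)) →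
      (∀ a ∈ S, f.eval a = 0) → f = 0 := by
  classical
  induction k with
  | zero =>
    intro f S hd _ _ _
    by_contra h
    simp only [Nat.cast_zero] at hd
    exact absurd hd (not_lt.2 (Polynomial.zero_le_degree_iff.2 h))
  | succ k ih =>
    intro f S hd hcard hunit heval
    obtain ⟨a, ha⟩ : S.Nonempty := Finset.card_pos.1 (by omega)
    obtain ⟨g, hg⟩ := (Polynomial.dvd_iff_isRoot.2 (heval a ha))
    rw [mul_comm] at hg
    by_cases hg0 : g = 0
    · rw [hg, hg0, zero_mul]
    have hgdeg : g.degree < k := by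
      rw [hg, (Polynomial.monic_X_sub_C a).degree_mul, Polynomial.degree_X_sub_C,
        g.degree_eq_natDegree hg0] at hd
      rw [g.degree_eq_natDegree hg0]
      have hlt : g.natDegree + 1 < k + 1 := by exact_mod_cast hd
      exact_mod_cast (by omega : g.natDegree < k)
    have hz : g = 0 := by
      refine ih g (S.erase a) hgdeg ?_ ?_ ?_
      · rw [Finset.card_erase_of_mem ha]; omega
      · exact fun x hx y hy hxy =>
          hunit x (Finset.mem_of_mem_erase hx) y (Finset.mem_of_mem_erase hy) hxy
      · intro b hb
        have hbS := Finset.mem_of_mem_erase hb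
        have hne : b ≠ a := Finset.ne_of_mem_erase hb
        have h0 : (b - a) * g.eval b = 0 := by
          have := heval b hbS
          rw [hg] at this
          simpa [mul_comm] using this
        exact ((hunit b hbS a ha hne).mul_right_eq_zero).1 h0
    rw [hg, hz, zero_mul]

/-- Over a nontrivial commutative ring `A`, given pairwise-subtractive
evaluation points and unit multipliers, every nonzero codeword of the generalized
Reed–Solomon code `GRS_v(N, k)` (for `1 ≤ k ≤ N`) has Hamming weight at least `N - k + 1`,
and some nonzero codeword has Hamming weight exactly `N - k + 1`: GRS codes are MDS. -/
theorem GRS_is_MDS (A : Type*) [CommRing A] [Nontrivial A] (N k : ℕ)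
    (α v : Fin N → A) (hα : ∀ i j, i ≠ j → IsUnit (α i - α j)) (hv : ∀ i, IsUnit (v i))
    (hk1 : 1 ≤ k) (hkN : k ≤ N) :
    (∀ c ∈ LinearMap.range (GRSmap A k α v), c ≠ 0 →
        N - k + 1 ≤ Set.ncard {i | c i ≠ 0}) ∧
    (∃ c ∈ LinearMap.range (GRSmap A k α v), c ≠ 0 ∧
        Set.ncard {i | c i ≠ 0} = N - k + 1) := by
  classical
  have hαinj : Function.Injective α := by
    intro i j hij
    by_contra h
    have hu := hα i j h
    rw [hij, sub_self] at hu
    exact hu.ne_zero rfl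
  constructor
  · -- minimum distance lower bound
    rintro c ⟨f, hf⟩ hc0
    have hfe : ∀ i, c i = v i * (f : Polynomial A).eval (α i) := fun i => by
      rw [← hf]; rfl
    set Z : Finset (Fin N) := Finset.univ.filter (fun i => c i = 0) with hZ
    have hsetc : {i | c i ≠ 0} = ↑(Finset.univ.filter (fun i => c i ≠ 0)) := by
      ext i; simp
    rw [hsetc, Set.ncard_coe_finset]
    have hsum : Z.card + (Finset.univ.filter (fun i => c i ≠ 0)).card = N := by
      have := Finset.card_filter_add_card_filter_not
        (s := (Finset.univ : Finset (Fin N))) (p := fun i => c i = 0)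
      simpa using this
    have hZlt : Z.card < k := by
      by_contra hge
      push_neg at hge
      have hf0 : (f : Polynomial A) = 0 := by
        refine GRS_vanish_aux k (f : Polynomial A) (Z.image α)
          (Polynomial.mem_degreeLT.1 f.2) ?_ ?_ ?_
        · rw [Finset.card_image_of_injective _ hαinj]; exact hge
        · rintro x hx y hy hxy
          obtain ⟨i, _, rfl⟩ := Finset.mem_image.1 hx
          obtain ⟨j, _, rfl⟩ := Finset.mem_image.1 hy
          exact hα i j (fun h => hxy (by rw [h]))
        · rintro x hx
          obtain ⟨i, hi, rfl⟩ := Finset.mem_image.1 hx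
          have hci : c i = 0 := (Finset.mem_filter.1 hi).2
          rw [hfe i] at hci
          exact ((hv i).mul_right_eq_zero).1 hci
      apply hc0
      funext i
      rw [hfe i, hf0]
      simp
    omega
  · -- existence of a codeword of weight N - k + 1
    have hkN' : k - 1 < N := by omega
    set m : Fin N := ⟨k - 1, hkN'⟩ with hm
    set T : Finset (Fin N) := Finset.Iio m with hT
    set g : Polynomial A := ∏ j ∈ T, (X - C (α j)) with hgdef
    have hmonic : g.Monic := monic_prod_of_monic T _ (fun j _ => monic_X_sub_C (α j))
    have hdeg : g.natDegree = k - 1 := by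
      rw [hgdef, natDegree_prod_of_monic _ _ (fun j _ => monic_X_sub_C (α j))]
      simp [Polynomial.natDegree_X_sub_C, hT, Fin.card_Iio, hm]
    have hmem : g ∈ Polynomial.degreeLT A k := by
      rw [Polynomial.mem_degreeLT, g.degree_eq_natDegree hmonic.ne_zero, hdeg]
      exact_mod_cast (by omega : k - 1 < k)
    have hcval : ∀ i, GRSmap A k α v ⟨g, hmem⟩ i = v i * g.eval (α i) := fun i => rfl
    have hz : ∀ i ∈ T, g.eval (α i) = 0 := by
      intro i hi
      rw [hgdef, eval_prod]
      exact Finset.prod_eq_zero hi (by simp)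
    have hu : ∀ i ∉ T, IsUnit (g.eval (α i)) := by
      intro i hi
      rw [hgdef, eval_prod]
      refine Finset.prod_induction _ IsUnit (fun a b => IsUnit.mul) isUnit_one ?_
      intro j hj
      simp only [eval_sub, eval_X, eval_C]
      exact hα i j (fun h => hi (by rw [h]; exact hj))
    refine ⟨GRSmap A k α v ⟨g, hmem⟩, ⟨⟨g, hmem⟩, rfl⟩, ?_, ?_⟩
    · intro h
      have hm0 : GRSmap A k α v ⟨g, hmem⟩ m = 0 := by rw [h]; rfl
      rw [hcval m] at hm0
      exact ((hv m).mul (hu m (by simp [hT]))).ne_zero hm0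
    · have hset : {i | GRSmap A k α v ⟨g, hmem⟩ i ≠ 0} = ↑(Tᶜ) := by
        ext i
        simp only [Set.mem_setOf_eq, Finset.coe_compl, Set.mem_compl_iff, Finset.mem_coe]
        constructor
        · intro hne hiT
          exact hne (by rw [hcval i, hz i hiT, mul_zero])
        · intro hiT
          rw [hcval i]
          exact ((hv i).mul (hu i hiT)).ne_zero
      rw [hset, Set.ncard_coe_finset, Finset.card_compl]
      simp only [Fintype.card_fin, hT, Fin.card_Iio, hm]
      omega
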